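/- Let |s|(n,m) := n!·[x^n]( (−log(1 − x))^m / m! ) denote the unsigned Stirling numbers of the first kind. Then in ℚ[[t]] one has Σ_{m≥0} |s|(m+2, m)·t^m = t·(2 + t)/(1 − t)^5; equivalently, (1 − t)^5 · Σ_{m≥0} |s|(m+2,m)·t^m = 2t + t^2. -/

import Mathlib

open PowerSeries

/-- The formal power series `−log(1 − x) = Σ_{n≥1} x^n/n` over `ℚ`. -/
noncomputable def negLogOneSub : ℚ⟦X⟧ :=
  PowerSeries.mk fun n => if n = 0 then 0 else 1 / (n : ℚ)

/-- The unsigned Stirling numbers of the first kind,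
`|s|(n,m) = n!·[x^n]((−log(1 − x))^m / m!)`. -/
noncomputable def stirling1Unsigned (n m : ℕ) : ℚ :=
  (n.factorial : ℚ) * coeff n (negLogOneSub ^ m) / m.factorial

noncomputable def gSer : ℚ⟦X⟧ := PowerSeries.mk fun n => 1 / ((n : ℚ) + 1)

lemma negLog_eq : negLogOneSub = X * gSer := by
  ext n
  cases n with
  | zero => simp [negLogOneSub]
  | succ k => simp [negLogOneSub, gSer, coeff_succ_X_mul]

lemma gc0 : coeff 0 gSer = 1 := by simp [gSer]
lemma gc1 : coeff 1 gSer = 1 / 2 := by norm_num [gSer]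
lemma gc2 : coeff 2 gSer = 1 / 3 := by norm_num [gSer]

lemma c0 (m : ℕ) : coeff 0 (gSer ^ m) = 1 := by
  have h : constantCoeff gSer = 1 := by
    rw [← coeff_zero_eq_constantCoeff]; exact gc0
  rw [coeff_zero_eq_constantCoeff, map_pow, h, one_pow]

lemma c1 (m : ℕ) : coeff 1 (gSer ^ m) = m / 2 := by
  induction m with
  | zero => simp
  | succ k ih =>
    rw [pow_succ, coeff_mul, Finset.Nat.sum_antidiagonal_eq_sum_range_succ_mk]
    rw [Finset.sum_range_succ, Finset.sum_range_one]
    simp only [Nat.sub_self, Nat.sub_zero, ih, c0, gc0, gc1]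
    push_cast; ring

lemma c2 (m : ℕ) : coeff 2 (gSer ^ m) = m * (m - 1) / 8 + m / 3 := by
  induction m with
  | zero => simp
  | succ k ih =>
    rw [pow_succ, coeff_mul, Finset.Nat.sum_antidiagonal_eq_sum_range_succ_mk]
    rw [Finset.sum_range_succ, Finset.sum_range_succ, Finset.sum_range_one]
    norm_num [ih, c0, c1, gc0, gc1, gc2]
    ring

lemma key (m : ℕ) :
    stirling1Unsigned (m + 2) m
      = ((m : ℚ) + 1) * ((m : ℚ) + 2) * ((m : ℚ) * ((m : ℚ) - 1) / 8 + (m : ℚ) / 3) := by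
  have hc : coeff (m + 2) (negLogOneSub ^ m) = (m : ℚ) * ((m : ℚ) - 1) / 8 + (m : ℚ) / 3 := by
    rw [negLog_eq, mul_pow, add_comm m 2, coeff_X_pow_mul, c2]
  rw [stirling1Unsigned, hc]
  rw [show m + 2 = (m + 1) + 1 from rfl, Nat.factorial_succ, Nat.factorial_succ]
  have hm : (m.factorial : ℚ) ≠ 0 := by exact_mod_cast m.factorial_ne_zero
  field_simp
  push_cast
  ring

lemma oneSubX_mul_mk (Q : ℕ → ℚ) :
    (1 - X : ℚ⟦X⟧) * PowerSeries.mk Q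
      = PowerSeries.mk fun n => Q n - if n = 0 then 0 else Q (n - 1) := by
  ext n
  rw [sub_mul, one_mul, map_sub]
  cases n with
  | zero => simp
  | succ k => simp [coeff_succ_X_mul]

/-- The o.g.f. of the third (`d = 2`) diagonal of the unsigned Stirling1 triangle:
`Σ_m |s|(m+2,m)·t^m = t(2 + t)/(1 − t)^5`, stated in the equivalent form
`(1 − t)^5 · Σ_m |s|(m+2,m)·t^m = 2t + t^2` in `ℚ[[t]]`. -/
theorem stirling1_diagonal_two_ogf :
    (1 - PowerSeries.X : ℚ⟦X⟧) ^ 5 * PowerSeries.mk (fun m => stirling1Unsigned (m + 2) m)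
      = 2 * PowerSeries.X + PowerSeries.X ^ 2 := by
  have hP : PowerSeries.mk (fun m => stirling1Unsigned (m + 2) m)
      = PowerSeries.mk (fun m =>
          ((m : ℚ) + 1) * ((m : ℚ) + 2) * ((m : ℚ) * ((m : ℚ) - 1) / 8 + (m : ℚ) / 3)) := by
    ext n; simp [key]
  rw [hP, show (5 : ℕ) = 4 + 1 from rfl, pow_succ, mul_assoc, oneSubX_mul_mk,
    show (4 : ℕ) = 3 + 1 from rfl, pow_succ, mul_assoc, oneSubX_mul_mk,
    show (3 : ℕ) = 2 + 1 from rfl, pow_succ, mul_assoc, oneSubX_mul_mk,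
    show (2 : ℕ) = 1 + 1 from rfl, pow_succ, mul_assoc, oneSubX_mul_mk,
    pow_one, oneSubX_mul_mk]
  have hrhs : (2 * PowerSeries.X + PowerSeries.X ^ 2 : ℚ⟦X⟧) = X + X + X ^ 2 := by
    ring
  rw [hrhs]
  ext n
  rw [coeff_mk, map_add, map_add]
  rcases n with _ | _ | _ | _ | _ | k
  · norm_num
  · norm_num [coeff_X, coeff_X_pow]
  · norm_num [coeff_X, coeff_X_pow]
  · norm_num [coeff_X, coeff_X_pow]
  · norm_num [coeff_X, coeff_X_pow]
  · have h1 : coeff (k + 5) (X : ℚ⟦X⟧) = 0 := by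
      rw [coeff_X]; simp
    have h2 : coeff (k + 5) ((X : ℚ⟦X⟧) ^ 2) = 0 := by
      rw [coeff_X_pow]; simp
    rw [h1, h2]
    norm_num
    ring
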